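/- With β₀ = 8.6142, λ = 0.44581, α = 0.76975, the quantity 1/β₀ - ((1+2α-2λ)(2(1+α)²+λ(2+α))·e^{3+2α})/(4λ(α-λ)(1+α)²) · ∫_{β₀}^∞ 1/(β e^β) dβ is greater than 0.1039. -/

import Mathlib

set_option maxHeartbeats 1000000

open MeasureTheory Set Real

private lemma expneg_hasDeriv (t : ℝ) :
    HasDerivAt (fun s : ℝ => Real.exp (-s)) (-Real.exp (-t)) t := by
  simpa using (hasDerivAt_neg t).exp

private lemma integrableOn_f (a : ℝ) (ha : 0 < a) :
    IntegrableOn (fun t : ℝ => 1/(t * Real.exp t)) (Set.Ioi a) := by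
  have hb : IntegrableOn (fun t : ℝ => a⁻¹ * Real.exp (-1 * t)) (Set.Ioi a) :=
    (exp_neg_integrableOn_Ioi a one_pos).const_mul a⁻¹
  refine Integrable.mono' hb ?_ ?_
  · refine ContinuousOn.aestronglyMeasurable ?_ measurableSet_Ioi
    refine ContinuousOn.div continuousOn_const (by fun_prop) ?_
    intro t ht
    exact (mul_pos (ha.trans ht) (Real.exp_pos t)).ne'
  · filter_upwards [ae_restrict_mem measurableSet_Ioi] with t ht
    have ht0 : 0 < t := ha.trans ht
    have hE := Real.exp_pos t
    rw [Real.norm_eq_abs, abs_of_nonneg (by positivity)]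
    rw [neg_one_mul, Real.exp_neg, one_div, mul_inv]
    exact mul_le_mul_of_nonneg_right (inv_anti₀ ha ht.le)
      (inv_nonneg.mpr (Real.exp_pos t).le)

private lemma contOn_f {a b : ℝ} (ha : 0 < a) (hab : a ≤ b) :
    IntervalIntegrable (fun t : ℝ => 1/(t * Real.exp t)) volume a b := by
  refine ContinuousOn.intervalIntegrable ?_
  rw [Set.uIcc_of_le hab]
  refine ContinuousOn.div continuousOn_const (by fun_prop) ?_
  intro t ht
  exact (mul_pos (lt_of_lt_of_le ha ht.1) (Real.exp_pos t)).ne'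

private lemma split_int {a b : ℝ} (ha : 0 < a) (hab : a ≤ b) :
    (∫ t in Set.Ioi a, 1/(t * Real.exp t))
      = (∫ t in a..b, 1/(t * Real.exp t)) + ∫ t in Set.Ioi b, 1/(t * Real.exp t) := by
  rw [intervalIntegral.integral_of_le hab]
  rw [← MeasureTheory.setIntegral_union (Set.Ioc_disjoint_Ioi le_rfl) measurableSet_Ioi
    ((integrableOn_f a ha).mono_set Set.Ioc_subset_Ioi_self)
    ((integrableOn_f a ha).mono_set (Set.Ioi_subset_Ioi hab)),
    Set.Ioc_union_Ioi_eq_Ioi hab]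

private lemma tail_bound :
    (∫ t in Set.Ioi (25:ℝ), 1/(t * Real.exp t)) ≤ Real.exp (-25) * (1/25) := by
  have h1 : (∫ t in Set.Ioi (25:ℝ), 1/(t * Real.exp t))
      ≤ ∫ t in Set.Ioi (25:ℝ), Real.exp (-t) * (1/25) := by
    have h0 : IntegrableOn (fun x : ℝ => Real.exp (-1 * x) * (1/25)) (Set.Ioi (25:ℝ)) :=
      (exp_neg_integrableOn_Ioi 25 one_pos).mul_const _
    refine setIntegral_mono_on (integrableOn_f 25 (by norm_num))
      (h0.congr_fun (fun t _ => by norm_num [neg_one_mul]) measurableSet_Ioi)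
      measurableSet_Ioi ?_
    intro t ht
    have ht0 : (0:ℝ) < t := lt_trans (by norm_num) ht
    have hE := Real.exp_pos t
    have h : 1/(t * Real.exp t) = Real.exp (-t) * (1/t) := by
      rw [Real.exp_neg]; ring
    rw [h]
    exact mul_le_mul_of_nonneg_left
      (one_div_le_one_div_of_le (by norm_num) (le_of_lt (Set.mem_Ioi.mp ht)))
      (Real.exp_pos _).le
  calc (∫ t in Set.Ioi (25:ℝ), 1/(t * Real.exp t))
      ≤ ∫ t in Set.Ioi (25:ℝ), Real.exp (-t) * (1/25) := h1
    _ = (∫ t in Set.Ioi (25:ℝ), Real.exp (-t)) * (1/25) := by rw [integral_mul_const]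
    _ = Real.exp (-25) * (1/25) := by rw [integral_exp_neg_Ioi]

private lemma exp_taylor5_le {z : ℝ} (hz : 0 ≤ z) :
    1 + z + z^2/2 + z^3/6 + z^4/24 ≤ Real.exp z := by
  have h := Real.sum_le_exp_of_nonneg hz 5
  rw [Finset.sum_range_succ, Finset.sum_range_succ, Finset.sum_range_succ,
      Finset.sum_range_succ, Finset.sum_range_succ, Finset.sum_range_zero] at h
  norm_num [Nat.factorial] at h
  linarith

private lemma exp_ub_gen {n : ℕ} {z r : ℝ} (hz : 0 ≤ z) (hr : 0 < r)
    (h : 1/r ≤ (2.7182818283:ℝ)^n * (1 + z + z^2/2 + z^3/6 + z^4/24)) :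
    Real.exp (-(n:ℝ) - z) ≤ r := by
  have he : (2.7182818283:ℝ) < Real.exp 1 := Real.exp_one_gt_d9
  have hn : (2.7182818283:ℝ)^n ≤ Real.exp n := by
    have he2 : Real.exp ((n:ℝ)) = (Real.exp 1)^n := by
      rw [← Real.exp_nat_mul, mul_one]
    rw [he2]
    exact pow_le_pow_left₀ (by norm_num) he.le n
  have hs := exp_taylor5_le hz
  have key : 1/r ≤ Real.exp ((n:ℝ) + z) := by
    rw [Real.exp_add]
    calc 1/r ≤ (2.7182818283:ℝ)^n * (1 + z + z^2/2 + z^3/6 + z^4/24) := h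
      _ ≤ Real.exp n * Real.exp z := by
          refine mul_le_mul hn hs ?_ (Real.exp_pos _).le
          positivity
  have hne : (-(n:ℝ) - z) = -((n:ℝ) + z) := by ring
  rw [hne, Real.exp_neg, inv_le_comm₀ (Real.exp_pos _) hr, ← one_div]
  exact key

private lemma exp_z_ub : Real.exp (0.4605:ℝ) ≤ 1.5848726 := by
  have habs : |(0.4605:ℝ)| = 0.4605 := abs_of_nonneg (by norm_num)
  have h := Real.exp_bound (x := (0.4605:ℝ)) (by rw [habs]; norm_num) (n := 8) (by norm_num)
  rw [Finset.sum_range_succ, Finset.sum_range_succ, Finset.sum_range_succ,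
      Finset.sum_range_succ, Finset.sum_range_succ, Finset.sum_range_succ,
      Finset.sum_range_succ, Finset.sum_range_succ, Finset.sum_range_zero, habs] at h
  have h2 := (abs_le.mp h).2
  norm_num [Nat.factorial] at h2 ⊢
  linarith

private lemma exp_lb_gen {n : ℕ} {z r : ℝ} (hz : Real.exp (0.4605:ℝ) ≤ z) (hr : 0 < r)
    (h : r * ((2.7182818286:ℝ)^n * z) ≤ 1) :
    r ≤ Real.exp (-(n:ℝ) - 0.4605) := by
  have he : Real.exp 1 < (2.7182818286:ℝ) := Real.exp_one_lt_d9
  have hn : Real.exp (n:ℝ) ≤ (2.7182818286:ℝ)^n := by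
    have he2 : Real.exp ((n:ℝ)) = (Real.exp 1)^n := by
      rw [← Real.exp_nat_mul, mul_one]
    rw [he2]
    exact pow_le_pow_left₀ (Real.exp_pos 1).le he.le n
  have key : Real.exp ((n:ℝ) + 0.4605) ≤ (2.7182818286:ℝ)^n * z := by
    rw [Real.exp_add]
    refine mul_le_mul hn hz (Real.exp_pos _).le ?_
    positivity
  have hne : (-(n:ℝ) - 0.4605) = -((n:ℝ) + 0.4605) := by ring
  rw [hne, Real.exp_neg, le_inv_comm₀ hr (Real.exp_pos _), ← one_div]
  calc Real.exp ((n:ℝ) + 0.4605) ≤ (2.7182818286:ℝ)^n * z := key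
    _ ≤ 1/r := by
        rw [le_div_iff₀ hr]
        linarith

private lemma exp_ub1 : Real.exp (-4.0747:ℝ) ≤ 0.01699757 := by
  have h := exp_ub_gen (n := 4) (z := 0.0747) (r := 0.01699757) (by norm_num) (by norm_num)
    (by norm_num)
  convert h using 2
  norm_num

private lemma exp_ub4 : Real.exp (-20.4605:ℝ) ≤ 0.00000000131 := by
  have h := exp_ub_gen (n := 20) (z := 0.4605) (r := 0.00000000131) (by norm_num) (by norm_num)
    (by norm_num)
  convert h using 2
  norm_num

private lemma exp_lb2 : (0.000574:ℝ) ≤ Real.exp (-7.4605:ℝ) := by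
  have h := exp_lb_gen (n := 7) (z := 1.5848726) (r := 0.000574) exp_z_ub (by norm_num)
    (by norm_num)
  convert h using 2
  norm_num

private lemma exp_lb3 : (0.0000105:ℝ) ≤ Real.exp (-11.4605:ℝ) := by
  have h := exp_lb_gen (n := 11) (z := 1.5848726) (r := 0.0000105) exp_z_ub (by norm_num)
    (by norm_num)
  convert h using 2
  norm_num

private lemma hD1 (t : ℝ) :
    HasDerivAt (fun s : ℝ => -Real.exp (-s) * (((1397770005586443583280237248632273724774442665000 : ℝ)/1668981209889909568109762161024035559780349302713) + ((-733454403968594057964148042081244786240375000000 : ℝ)/1668981209889909568109762161024035559780349302713) * s ^ 1 + ((251793499170493213073016785625556274375000000000 : ℝ)/1668981209889909568109762161024035559780349302713) * s ^ 2 + ((-179021226158468437728049458482668750000000000000 : ℝ)/5006943629669728704329286483072106679341047908139) * s ^ 3 + ((30262929395634275049610927868750000000000000000 : ℝ)/5006943629669728704329286483072106679341047908139) * s ^ 4 + ((-3701125927829281441450906250000000000000000000 : ℝ)/5006943629669728704329286483072106679341047908139) * s ^ 5 + ((980144416618704352343750000000000000000000000 : ℝ)/15020830889009186112987859449216320038023143724417)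 * s ^ 6 + ((-428181726195326171875000000000000000000000000 : ℝ)/105145816223064302790915016144514240266162006070919) * s ^ 7 + ((18003681044921875000000000000000000000000000 : ℝ)/105145816223064302790915016144514240266162006070919) * s ^ 8 + ((-4138486328125000000000000000000000000000000 : ℝ)/946312346007578725118235145300628162395458054638271) * s ^ 9 + ((48828125000000000000000000000000000000000 : ℝ)/946312346007578725118235145300628162395458054638271) * s ^ 10))
      (Real.exp (-t) * (((55000 : ℝ)/43071) + ((-1375000000 : ℝ)/1855111041) * t ^ 1 + ((6875000000000 : ℝ)/26633829215637) * t ^ 2 + ((-68750000000000000 : ℝ)/1147145658146701227) * t ^ 3 + ((68750000000000000000 : ℝ)/7058387234576652649731) * t ^ 4 + ((-343750000000000000000000 : ℝ)/304011796580451006276563901) * t ^ 5 + ((8593750000000000000000000000 : ℝ)/91658644633616237039365186459797) * t ^ 6 + ((-21484375000000000000000000000000 : ℝ)/3947829483014484945522497946009916587) * t ^ 7 + ((107421875000000000000000000000000000 : ℝ)/510110890988750643265798527097779351956031) * t ^ 8 + ((-107421875000000000000000000000000000000 : ℝ)/21970986185776478956101208360628454468098211201) * t ^ 9 + ((48828125000000000000000000000000000000000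 : ℝ)/946312346007578725118235145300628162395458054638271) * t ^ 10)) t := by
  have hH : HasDerivAt (fun s : ℝ => ((1397770005586443583280237248632273724774442665000 : ℝ)/1668981209889909568109762161024035559780349302713) + ((-733454403968594057964148042081244786240375000000 : ℝ)/1668981209889909568109762161024035559780349302713) * s ^ 1 + ((251793499170493213073016785625556274375000000000 : ℝ)/1668981209889909568109762161024035559780349302713) * s ^ 2 + ((-179021226158468437728049458482668750000000000000 : ℝ)/5006943629669728704329286483072106679341047908139) * s ^ 3 + ((30262929395634275049610927868750000000000000000 : ℝ)/5006943629669728704329286483072106679341047908139) * s ^ 4 + ((-3701125927829281441450906250000000000000000000 : ℝ)/5006943629669728704329286483072106679341047908139) * s ^ 5 + ((980144416618704352343750000000000000000000000 : ℝ)/15020830889009186112987859449216320038023143724417) * s ^ 6 + ((-428181726195326171875000000000000000000000000 : ℝ)/105145816223064302790915016144514240266162006070919) * s ^ 7 + ((18003681044921875000000000000000000000000000 : ℝ)/105145816223064302790915016144514240266162006070919) * s ^ 8 + ((-4138486328125000000000000000000000000000000 : ℝ)/946312346007578725118235145300628162395458054638271) * s ^ 9 + ((48828125000000000000000000000000000000000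 : ℝ)/946312346007578725118235145300628162395458054638271) * s ^ 10) (((-733454403968594057964148042081244786240375000000 : ℝ)/1668981209889909568109762161024035559780349302713) + ((503586998340986426146033571251112548750000000000 : ℝ)/1668981209889909568109762161024035559780349302713) * t ^ 1 + ((-179021226158468437728049458482668750000000000000 : ℝ)/1668981209889909568109762161024035559780349302713) * t ^ 2 + ((121051717582537100198443711475000000000000000000 : ℝ)/5006943629669728704329286483072106679341047908139) * t ^ 3 + ((-18505629639146407207254531250000000000000000000 : ℝ)/5006943629669728704329286483072106679341047908139) * t ^ 4 + ((1960288833237408704687500000000000000000000000 : ℝ)/5006943629669728704329286483072106679341047908139) * t ^ 5 + ((-428181726195326171875000000000000000000000000 : ℝ)/15020830889009186112987859449216320038023143724417) * t ^ 6 + ((144029448359375000000000000000000000000000000 : ℝ)/105145816223064302790915016144514240266162006070919) * t ^ 7 + ((-4138486328125000000000000000000000000000000 : ℝ)/105145816223064302790915016144514240266162006070919) * t ^ 8 + ((488281250000000000000000000000000000000000 : ℝ)/946312346007578725118235145300628162395458054638271) * t ^ 9) t := by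
    have h := (((((((((((hasDerivAt_const t ((1397770005586443583280237248632273724774442665000 : ℝ)/1668981209889909568109762161024035559780349302713)).add ((hasDerivAt_pow 1 t).const_mul ((-733454403968594057964148042081244786240375000000 : ℝ)/1668981209889909568109762161024035559780349302713))).add ((hasDerivAt_pow 2 t).const_mul ((251793499170493213073016785625556274375000000000 : ℝ)/1668981209889909568109762161024035559780349302713))).add ((hasDerivAt_pow 3 t).const_mul ((-179021226158468437728049458482668750000000000000 : ℝ)/5006943629669728704329286483072106679341047908139))).add ((hasDerivAt_pow 4 t).const_mul ((30262929395634275049610927868750000000000000000 : ℝ)/5006943629669728704329286483072106679341047908139))).add ((hasDerivAt_pow 5 t).const_mul ((-3701125927829281441450906250000000000000000000 : ℝ)/5006943629669728704329286483072106679341047908139))).add ((hasDerivAt_pow 6 t).const_mul ((980144416618704352343750000000000000000000000 : ℝ)/15020830889009186112987859449216320038023143724417))).add ((hasDerivAt_pow 7 t).const_mul ((-428181726195326171875000000000000000000000000 : ℝ)/105145816223064302790915016144514240266162006070919))).add ((hasDerivAt_pow 8 t).const_mul ((18003681044921875000000000000000000000000000 : ℝ)/105145816223064302790915016144514240266162006070919))).add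 ((hasDerivAt_pow 9 t).const_mul ((-4138486328125000000000000000000000000000000 : ℝ)/946312346007578725118235145300628162395458054638271))).add ((hasDerivAt_pow 10 t).const_mul ((48828125000000000000000000000000000000000 : ℝ)/946312346007578725118235145300628162395458054638271)))
    exact h.congr_deriv (by push_cast; ring)
  have h := (expneg_hasDeriv t).neg.mul hH
  exact h.congr_deriv (by simp only [Pi.neg_apply]; ring)

private lemma ftc1 : ∫ t in (8.6142:ℝ)..12, Real.exp (-t) * (((55000 : ℝ)/43071) + ((-1375000000 : ℝ)/1855111041) * t ^ 1 + ((6875000000000 : ℝ)/26633829215637) * t ^ 2 + ((-68750000000000000 : ℝ)/1147145658146701227) * t ^ 3 + ((68750000000000000000 : ℝ)/7058387234576652649731) * t ^ 4 + ((-343750000000000000000000 : ℝ)/304011796580451006276563901) * t ^ 5 + ((8593750000000000000000000000 : ℝ)/91658644633616237039365186459797) * t ^ 6 + ((-21484375000000000000000000000000 : ℝ)/3947829483014484945522497946009916587) * t ^ 7 + ((107421875000000000000000000000000000 : ℝ)/510110890988750643265798527097779351956031) * t ^ 8 + ((-107421875000000000000000000000000000000 : ℝ)/21970986185776478956101208360628454468098211201)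 * t ^ 9 + ((48828125000000000000000000000000000000000 : ℝ)/946312346007578725118235145300628162395458054638271) * t ^ 10)
    = Real.exp (-(8.6142:ℝ)) * (((175378633175988032061585138900542345206067515000 : ℝ)/1668981209889909568109762161024035559780349302713)) - Real.exp (-(12:ℝ)) * (((938821846205301336926086515641678599229598655000 : ℝ)/11682868469229366976768335127168248918462445118991)) := by
  rw [intervalIntegral.integral_eq_sub_of_hasDerivAt (fun t _ => hD1 t)
    (Continuous.intervalIntegrable (by fun_prop) _ _)]
  norm_num
  ring

private lemma pointwise1 {t : ℝ} (ht : t ∈ Set.Icc (8.6142:ℝ) 12) :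
    1/(t * Real.exp t) ≤ Real.exp (-t) * (((55000 : ℝ)/43071) + ((-1375000000 : ℝ)/1855111041) * t ^ 1 + ((6875000000000 : ℝ)/26633829215637) * t ^ 2 + ((-68750000000000000 : ℝ)/1147145658146701227) * t ^ 3 + ((68750000000000000000 : ℝ)/7058387234576652649731) * t ^ 4 + ((-343750000000000000000000 : ℝ)/304011796580451006276563901) * t ^ 5 + ((8593750000000000000000000000 : ℝ)/91658644633616237039365186459797) * t ^ 6 + ((-21484375000000000000000000000000 : ℝ)/3947829483014484945522497946009916587) * t ^ 7 + ((107421875000000000000000000000000000 : ℝ)/510110890988750643265798527097779351956031) * t ^ 8 + ((-107421875000000000000000000000000000000 : ℝ)/21970986185776478956101208360628454468098211201) * t ^ 9 + ((48828125000000000000000000000000000000000 : ℝ)/946312346007578725118235145300628162395458054638271) * t ^ 10) := by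
  have ht0 : (0:ℝ) < t := lt_of_lt_of_le (by norm_num) ht.1
  have hE := Real.exp_pos t
  have key : t * (((55000 : ℝ)/43071) + ((-1375000000 : ℝ)/1855111041) * t ^ 1 + ((6875000000000 : ℝ)/26633829215637) * t ^ 2 + ((-68750000000000000 : ℝ)/1147145658146701227) * t ^ 3 + ((68750000000000000000 : ℝ)/7058387234576652649731) * t ^ 4 + ((-343750000000000000000000 : ℝ)/304011796580451006276563901) * t ^ 5 + ((8593750000000000000000000000 : ℝ)/91658644633616237039365186459797) * t ^ 6 + ((-21484375000000000000000000000000 : ℝ)/3947829483014484945522497946009916587) * t ^ 7 + ((107421875000000000000000000000000000 : ℝ)/510110890988750643265798527097779351956031) * t ^ 8 + ((-107421875000000000000000000000000000000 : ℝ)/21970986185776478956101208360628454468098211201) * t ^ 9 + ((48828125000000000000000000000000000000000 : ℝ)/946312346007578725118235145300628162395458054638271) * t ^ 10) = 1 + (t - 8.6142)^11 / 8.6142^11 := by ring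
  have hge : (1:ℝ) ≤ t * (((55000 : ℝ)/43071) + ((-1375000000 : ℝ)/1855111041) * t ^ 1 + ((6875000000000 : ℝ)/26633829215637) * t ^ 2 + ((-68750000000000000 : ℝ)/1147145658146701227) * t ^ 3 + ((68750000000000000000 : ℝ)/7058387234576652649731) * t ^ 4 + ((-343750000000000000000000 : ℝ)/304011796580451006276563901) * t ^ 5 + ((8593750000000000000000000000 : ℝ)/91658644633616237039365186459797) * t ^ 6 + ((-21484375000000000000000000000000 : ℝ)/3947829483014484945522497946009916587) * t ^ 7 + ((107421875000000000000000000000000000 : ℝ)/510110890988750643265798527097779351956031) * t ^ 8 + ((-107421875000000000000000000000000000000 : ℝ)/21970986185776478956101208360628454468098211201) * t ^ 9 + ((48828125000000000000000000000000000000000 : ℝ)/946312346007578725118235145300628162395458054638271) * t ^ 10) := by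
    rw [key]
    have h11 : (0:ℝ) ≤ (t - 8.6142)^11 / 8.6142^11 := by
      have := sub_nonneg.mpr ht.1
      positivity
    linarith
  have hinv : 1/t ≤ (((55000 : ℝ)/43071) + ((-1375000000 : ℝ)/1855111041) * t ^ 1 + ((6875000000000 : ℝ)/26633829215637) * t ^ 2 + ((-68750000000000000 : ℝ)/1147145658146701227) * t ^ 3 + ((68750000000000000000 : ℝ)/7058387234576652649731) * t ^ 4 + ((-343750000000000000000000 : ℝ)/304011796580451006276563901) * t ^ 5 + ((8593750000000000000000000000 : ℝ)/91658644633616237039365186459797) * t ^ 6 + ((-21484375000000000000000000000000 : ℝ)/3947829483014484945522497946009916587) * t ^ 7 + ((107421875000000000000000000000000000 : ℝ)/510110890988750643265798527097779351956031) * t ^ 8 + ((-107421875000000000000000000000000000000 : ℝ)/21970986185776478956101208360628454468098211201) * t ^ 9 + ((48828125000000000000000000000000000000000 : ℝ)/946312346007578725118235145300628162395458054638271) * t ^ 10) := by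
    rw [div_le_iff₀ ht0, mul_comm]
    exact hge
  calc 1/(t * Real.exp t) = (1/t) * Real.exp (-t) := by rw [Real.exp_neg]; ring
    _ ≤ (((55000 : ℝ)/43071) + ((-1375000000 : ℝ)/1855111041) * t ^ 1 + ((6875000000000 : ℝ)/26633829215637) * t ^ 2 + ((-68750000000000000 : ℝ)/1147145658146701227) * t ^ 3 + ((68750000000000000000 : ℝ)/7058387234576652649731) * t ^ 4 + ((-343750000000000000000000 : ℝ)/304011796580451006276563901) * t ^ 5 + ((8593750000000000000000000000 : ℝ)/91658644633616237039365186459797) * t ^ 6 + ((-21484375000000000000000000000000 : ℝ)/3947829483014484945522497946009916587) * t ^ 7 + ((107421875000000000000000000000000000 : ℝ)/510110890988750643265798527097779351956031) * t ^ 8 + ((-107421875000000000000000000000000000000 : ℝ)/21970986185776478956101208360628454468098211201) * t ^ 9 + ((48828125000000000000000000000000000000000 : ℝ)/946312346007578725118235145300628162395458054638271) * t ^ 10) * Real.exp (-t) := mul_le_mul_of_nonneg_right hinv (Real.exp_pos _).le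
    _ = Real.exp (-t) * (((55000 : ℝ)/43071) + ((-1375000000 : ℝ)/1855111041) * t ^ 1 + ((6875000000000 : ℝ)/26633829215637) * t ^ 2 + ((-68750000000000000 : ℝ)/1147145658146701227) * t ^ 3 + ((68750000000000000000 : ℝ)/7058387234576652649731) * t ^ 4 + ((-343750000000000000000000 : ℝ)/304011796580451006276563901) * t ^ 5 + ((8593750000000000000000000000 : ℝ)/91658644633616237039365186459797) * t ^ 6 + ((-21484375000000000000000000000000 : ℝ)/3947829483014484945522497946009916587) * t ^ 7 + ((107421875000000000000000000000000000 : ℝ)/510110890988750643265798527097779351956031) * t ^ 8 + ((-107421875000000000000000000000000000000 : ℝ)/21970986185776478956101208360628454468098211201) * t ^ 9 + ((48828125000000000000000000000000000000000 : ℝ)/946312346007578725118235145300628162395458054638271) * t ^ 10) := by ring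

private lemma mono1 : (∫ t in (8.6142:ℝ)..12, 1/(t * Real.exp t))
    ≤ Real.exp (-(8.6142:ℝ)) * (((175378633175988032061585138900542345206067515000 : ℝ)/1668981209889909568109762161024035559780349302713)) - Real.exp (-(12:ℝ)) * (((938821846205301336926086515641678599229598655000 : ℝ)/11682868469229366976768335127168248918462445118991)) := by
  rw [← ftc1]
  refine intervalIntegral.integral_mono_on (by norm_num)
    (contOn_f (by norm_num) (by norm_num))
    (Continuous.intervalIntegrable (by fun_prop) _ _) ?_
  intro t ht
  exact pointwise1 ht

private lemma hD2 (t : ℝ) :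
    HasDerivAt (fun s : ℝ => -Real.exp (-s) * (((23694461 : ℝ)/35831808) + ((-9151363 : ℝ)/35831808) * s ^ 1 + ((4534397 : ℝ)/71663616) * s ^ 2 + ((-2308483 : ℝ)/214990848) * s ^ 3 + ((1112957 : ℝ)/859963392) * s ^ 4 + ((-96743 : ℝ)/859963392) * s ^ 5 + ((36313 : ℝ)/5159780352) * s ^ 6 + ((-1601 : ℝ)/5159780352) * s ^ 7 + ((379 : ℝ)/41278242816) * s ^ 8 + ((-61 : ℝ)/371504185344) * s ^ 9 + ((1 : ℝ)/743008370688) * s ^ 10))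
      (Real.exp (-t) * (((11 : ℝ)/12) + ((-55 : ℝ)/144) * t ^ 1 + ((55 : ℝ)/576) * t ^ 2 + ((-55 : ℝ)/3456) * t ^ 3 + ((77 : ℝ)/41472) * t ^ 4 + ((-77 : ℝ)/497664) * t ^ 5 + ((55 : ℝ)/5971968) * t ^ 6 + ((-55 : ℝ)/143327232) * t ^ 7 + ((55 : ℝ)/5159780352) * t ^ 8 + ((-11 : ℝ)/61917364224) * t ^ 9 + ((1 : ℝ)/743008370688) * t ^ 10)) t := by
  have hH : HasDerivAt (fun s : ℝ => ((23694461 : ℝ)/35831808) + ((-9151363 : ℝ)/35831808) * s ^ 1 + ((4534397 : ℝ)/71663616) * s ^ 2 + ((-2308483 : ℝ)/214990848) * s ^ 3 + ((1112957 : ℝ)/859963392) * s ^ 4 + ((-96743 : ℝ)/859963392) * s ^ 5 + ((36313 : ℝ)/5159780352) * s ^ 6 + ((-1601 : ℝ)/5159780352) * s ^ 7 + ((379 : ℝ)/41278242816) * s ^ 8 + ((-61 : ℝ)/371504185344) * s ^ 9 + ((1 : ℝ)/743008370688) * s ^ 10) (((-9151363 : ℝ)/35831808) + ((4534397 : ℝ)/35831808)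 * t ^ 1 + ((-2308483 : ℝ)/71663616) * t ^ 2 + ((1112957 : ℝ)/214990848) * t ^ 3 + ((-483715 : ℝ)/859963392) * t ^ 4 + ((36313 : ℝ)/859963392) * t ^ 5 + ((-11207 : ℝ)/5159780352) * t ^ 6 + ((379 : ℝ)/5159780352) * t ^ 7 + ((-61 : ℝ)/41278242816) * t ^ 8 + ((5 : ℝ)/371504185344) * t ^ 9) t := by
    have h := (((((((((((hasDerivAt_const t ((23694461 : ℝ)/35831808)).add ((hasDerivAt_pow 1 t).const_mul ((-9151363 : ℝ)/35831808))).add ((hasDerivAt_pow 2 t).const_mul ((4534397 : ℝ)/71663616))).add ((hasDerivAt_pow 3 t).const_mul ((-2308483 : ℝ)/214990848))).add ((hasDerivAt_pow 4 t).const_mul ((1112957 : ℝ)/859963392))).add ((hasDerivAt_pow 5 t).const_mul ((-96743 : ℝ)/859963392))).add ((hasDerivAt_pow 6 t).const_mul ((36313 : ℝ)/5159780352))).add ((hasDerivAt_pow 7 t).const_mul ((-1601 : ℝ)/5159780352))).add ((hasDerivAt_pow 8 t).const_mul ((379 : ℝ)/41278242816))).add ((hasDerivAt_pow 9 t).const_mul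 ((-61 : ℝ)/371504185344))).add ((hasDerivAt_pow 10 t).const_mul ((1 : ℝ)/743008370688)))
    exact h.congr_deriv (by push_cast; ring)
  have h := (expneg_hasDeriv t).neg.mul hH
  exact h.congr_deriv (by simp only [Pi.neg_apply]; ring)

private lemma ftc2 : ∫ t in (12:ℝ)..16, Real.exp (-t) * (((11 : ℝ)/12) + ((-55 : ℝ)/144) * t ^ 1 + ((55 : ℝ)/576) * t ^ 2 + ((-55 : ℝ)/3456) * t ^ 3 + ((77 : ℝ)/41472) * t ^ 4 + ((-77 : ℝ)/497664) * t ^ 5 + ((55 : ℝ)/5971968) * t ^ 6 + ((-55 : ℝ)/143327232) * t ^ 7 + ((55 : ℝ)/5159780352) * t ^ 8 + ((-11 : ℝ)/61917364224) * t ^ 9 + ((1 : ℝ)/743008370688) * t ^ 10)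
    = Real.exp (-(12:ℝ)) * (((2770817 : ℝ)/35831808)) - Real.exp (-(16:ℝ)) * (((171625181 : ℝ)/2902376448)) := by
  rw [intervalIntegral.integral_eq_sub_of_hasDerivAt (fun t _ => hD2 t)
    (Continuous.intervalIntegrable (by fun_prop) _ _)]
  norm_num
  ring

private lemma pointwise2 {t : ℝ} (ht : t ∈ Set.Icc (12:ℝ) 16) :
    1/(t * Real.exp t) ≤ Real.exp (-t) * (((11 : ℝ)/12) + ((-55 : ℝ)/144) * t ^ 1 + ((55 : ℝ)/576) * t ^ 2 + ((-55 : ℝ)/3456) * t ^ 3 + ((77 : ℝ)/41472) * t ^ 4 + ((-77 : ℝ)/497664) * t ^ 5 + ((55 : ℝ)/5971968) * t ^ 6 + ((-55 : ℝ)/143327232) * t ^ 7 + ((55 : ℝ)/5159780352) * t ^ 8 + ((-11 : ℝ)/61917364224) * t ^ 9 + ((1 : ℝ)/743008370688) * t ^ 10) := by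
  have ht0 : (0:ℝ) < t := lt_of_lt_of_le (by norm_num) ht.1
  have hE := Real.exp_pos t
  have key : t * (((11 : ℝ)/12) + ((-55 : ℝ)/144) * t ^ 1 + ((55 : ℝ)/576) * t ^ 2 + ((-55 : ℝ)/3456) * t ^ 3 + ((77 : ℝ)/41472) * t ^ 4 + ((-77 : ℝ)/497664) * t ^ 5 + ((55 : ℝ)/5971968) * t ^ 6 + ((-55 : ℝ)/143327232) * t ^ 7 + ((55 : ℝ)/5159780352) * t ^ 8 + ((-11 : ℝ)/61917364224) * t ^ 9 + ((1 : ℝ)/743008370688) * t ^ 10) = 1 + (t - 12)^11 / 12^11 := by ring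
  have hge : (1:ℝ) ≤ t * (((11 : ℝ)/12) + ((-55 : ℝ)/144) * t ^ 1 + ((55 : ℝ)/576) * t ^ 2 + ((-55 : ℝ)/3456) * t ^ 3 + ((77 : ℝ)/41472) * t ^ 4 + ((-77 : ℝ)/497664) * t ^ 5 + ((55 : ℝ)/5971968) * t ^ 6 + ((-55 : ℝ)/143327232) * t ^ 7 + ((55 : ℝ)/5159780352) * t ^ 8 + ((-11 : ℝ)/61917364224) * t ^ 9 + ((1 : ℝ)/743008370688) * t ^ 10) := by
    rw [key]
    have h11 : (0:ℝ) ≤ (t - 12)^11 / 12^11 := by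
      have := sub_nonneg.mpr ht.1
      positivity
    linarith
  have hinv : 1/t ≤ (((11 : ℝ)/12) + ((-55 : ℝ)/144) * t ^ 1 + ((55 : ℝ)/576) * t ^ 2 + ((-55 : ℝ)/3456) * t ^ 3 + ((77 : ℝ)/41472) * t ^ 4 + ((-77 : ℝ)/497664) * t ^ 5 + ((55 : ℝ)/5971968) * t ^ 6 + ((-55 : ℝ)/143327232) * t ^ 7 + ((55 : ℝ)/5159780352) * t ^ 8 + ((-11 : ℝ)/61917364224) * t ^ 9 + ((1 : ℝ)/743008370688) * t ^ 10) := by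
    rw [div_le_iff₀ ht0, mul_comm]
    exact hge
  calc 1/(t * Real.exp t) = (1/t) * Real.exp (-t) := by rw [Real.exp_neg]; ring
    _ ≤ (((11 : ℝ)/12) + ((-55 : ℝ)/144) * t ^ 1 + ((55 : ℝ)/576) * t ^ 2 + ((-55 : ℝ)/3456) * t ^ 3 + ((77 : ℝ)/41472) * t ^ 4 + ((-77 : ℝ)/497664) * t ^ 5 + ((55 : ℝ)/5971968) * t ^ 6 + ((-55 : ℝ)/143327232) * t ^ 7 + ((55 : ℝ)/5159780352) * t ^ 8 + ((-11 : ℝ)/61917364224) * t ^ 9 + ((1 : ℝ)/743008370688) * t ^ 10) * Real.exp (-t) := mul_le_mul_of_nonneg_right hinv (Real.exp_pos _).le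
    _ = Real.exp (-t) * (((11 : ℝ)/12) + ((-55 : ℝ)/144) * t ^ 1 + ((55 : ℝ)/576) * t ^ 2 + ((-55 : ℝ)/3456) * t ^ 3 + ((77 : ℝ)/41472) * t ^ 4 + ((-77 : ℝ)/497664) * t ^ 5 + ((55 : ℝ)/5971968) * t ^ 6 + ((-55 : ℝ)/143327232) * t ^ 7 + ((55 : ℝ)/5159780352) * t ^ 8 + ((-11 : ℝ)/61917364224) * t ^ 9 + ((1 : ℝ)/743008370688) * t ^ 10) := by ring

private lemma mono2 : (∫ t in (12:ℝ)..16, 1/(t * Real.exp t))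
    ≤ Real.exp (-(12:ℝ)) * (((2770817 : ℝ)/35831808)) - Real.exp (-(16:ℝ)) * (((171625181 : ℝ)/2902376448)) := by
  rw [← ftc2]
  refine intervalIntegral.integral_mono_on (by norm_num)
    (contOn_f (by norm_num) (by norm_num))
    (Continuous.intervalIntegrable (by fun_prop) _ _) ?_
  intro t ht
  exact pointwise2 ht

private lemma hD3 (t : ℝ) :
    HasDerivAt (fun s : ℝ => -Real.exp (-s) * (((36490074199 : ℝ)/68719476736) + ((-10754566057 : ℝ)/68719476736) * s ^ 1 + ((4009384023 : ℝ)/137438953472) * s ^ 2 + ((-509032419 : ℝ)/137438953472) * s ^ 3 + ((183027741 : ℝ)/549755813888) * s ^ 4 + ((-11838663 : ℝ)/549755813888) * s ^ 5 + ((1100051 : ℝ)/1099511627776) * s ^ 6 + ((-35947 : ℝ)/1099511627776) * s ^ 7 + ((6293 : ℝ)/8796093022208) * s ^ 8 + ((-83 : ℝ)/8796093022208) * s ^ 9 + ((1 : ℝ)/17592186044416) * s ^ 10))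
      (Real.exp (-t) * (((11 : ℝ)/16) + ((-55 : ℝ)/256) * t ^ 1 + ((165 : ℝ)/4096) * t ^ 2 + ((-165 : ℝ)/32768) * t ^ 3 + ((231 : ℝ)/524288) * t ^ 4 + ((-231 : ℝ)/8388608) * t ^ 5 + ((165 : ℝ)/134217728) * t ^ 6 + ((-165 : ℝ)/4294967296) * t ^ 7 + ((55 : ℝ)/68719476736) * t ^ 8 + ((-11 : ℝ)/1099511627776) * t ^ 9 + ((1 : ℝ)/17592186044416) * t ^ 10)) t := by
  have hH : HasDerivAt (fun s : ℝ => ((36490074199 : ℝ)/68719476736) + ((-10754566057 : ℝ)/68719476736) * s ^ 1 + ((4009384023 : ℝ)/137438953472) * s ^ 2 + ((-509032419 : ℝ)/137438953472) * s ^ 3 + ((183027741 : ℝ)/549755813888) * s ^ 4 + ((-11838663 : ℝ)/549755813888) * s ^ 5 + ((1100051 : ℝ)/1099511627776) * s ^ 6 + ((-35947 : ℝ)/1099511627776) * s ^ 7 + ((6293 : ℝ)/8796093022208) * s ^ 8 + ((-83 : ℝ)/8796093022208) * s ^ 9 + ((1 : ℝ)/17592186044416) * s ^ 10) (((-10754566057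 : ℝ)/68719476736) + ((4009384023 : ℝ)/68719476736) * t ^ 1 + ((-1527097257 : ℝ)/137438953472) * t ^ 2 + ((183027741 : ℝ)/137438953472) * t ^ 3 + ((-59193315 : ℝ)/549755813888) * t ^ 4 + ((3300153 : ℝ)/549755813888) * t ^ 5 + ((-251629 : ℝ)/1099511627776) * t ^ 6 + ((6293 : ℝ)/1099511627776) * t ^ 7 + ((-747 : ℝ)/8796093022208) * t ^ 8 + ((5 : ℝ)/8796093022208) * t ^ 9) t := by
    have h := (((((((((((hasDerivAt_const t ((36490074199 : ℝ)/68719476736)).add ((hasDerivAt_pow 1 t).const_mul ((-10754566057 : ℝ)/68719476736))).add ((hasDerivAt_pow 2 t).const_mul ((4009384023 : ℝ)/137438953472))).add ((hasDerivAt_pow 3 t).const_mul ((-509032419 : ℝ)/137438953472))).add ((hasDerivAt_pow 4 t).const_mul ((183027741 : ℝ)/549755813888))).add ((hasDerivAt_pow 5 t).const_mul ((-11838663 : ℝ)/549755813888))).add ((hasDerivAt_pow 6 t).const_mul ((1100051 : ℝ)/1099511627776))).add ((hasDerivAt_pow 7 t).const_mul ((-35947 : ℝ)/1099511627776))).add ((hasDerivAt_pow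 8 t).const_mul ((6293 : ℝ)/8796093022208))).add ((hasDerivAt_pow 9 t).const_mul ((-83 : ℝ)/8796093022208))).add ((hasDerivAt_pow 10 t).const_mul ((1 : ℝ)/17592186044416)))
    exact h.congr_deriv (by push_cast; ring)
  have h := (expneg_hasDeriv t).neg.mul hH
  exact h.congr_deriv (by simp only [Pi.neg_apply]; ring)

private lemma ftc3 : ∫ t in (16:ℝ)..25, Real.exp (-t) * (((11 : ℝ)/16) + ((-55 : ℝ)/256) * t ^ 1 + ((165 : ℝ)/4096) * t ^ 2 + ((-165 : ℝ)/32768) * t ^ 3 + ((231 : ℝ)/524288) * t ^ 4 + ((-231 : ℝ)/8388608) * t ^ 5 + ((165 : ℝ)/134217728) * t ^ 6 + ((-165 : ℝ)/4294967296) * t ^ 7 + ((55 : ℝ)/68719476736) * t ^ 8 + ((-11 : ℝ)/1099511627776) * t ^ 9 + ((1 : ℝ)/17592186044416) * t ^ 10)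
    = Real.exp (-(16:ℝ)) * (((4055011655 : ℝ)/68719476736)) - Real.exp (-(25:ℝ)) * (((686572023269 : ℝ)/17592186044416)) := by
  rw [intervalIntegral.integral_eq_sub_of_hasDerivAt (fun t _ => hD3 t)
    (Continuous.intervalIntegrable (by fun_prop) _ _)]
  norm_num
  ring

private lemma pointwise3 {t : ℝ} (ht : t ∈ Set.Icc (16:ℝ) 25) :
    1/(t * Real.exp t) ≤ Real.exp (-t) * (((11 : ℝ)/16) + ((-55 : ℝ)/256) * t ^ 1 + ((165 : ℝ)/4096) * t ^ 2 + ((-165 : ℝ)/32768) * t ^ 3 + ((231 : ℝ)/524288) * t ^ 4 + ((-231 : ℝ)/8388608) * t ^ 5 + ((165 : ℝ)/134217728) * t ^ 6 + ((-165 : ℝ)/4294967296) * t ^ 7 + ((55 : ℝ)/68719476736) * t ^ 8 + ((-11 : ℝ)/1099511627776) * t ^ 9 + ((1 : ℝ)/17592186044416) * t ^ 10) := by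
  have ht0 : (0:ℝ) < t := lt_of_lt_of_le (by norm_num) ht.1
  have hE := Real.exp_pos t
  have key : t * (((11 : ℝ)/16) + ((-55 : ℝ)/256) * t ^ 1 + ((165 : ℝ)/4096) * t ^ 2 + ((-165 : ℝ)/32768) * t ^ 3 + ((231 : ℝ)/524288) * t ^ 4 + ((-231 : ℝ)/8388608) * t ^ 5 + ((165 : ℝ)/134217728) * t ^ 6 + ((-165 : ℝ)/4294967296) * t ^ 7 + ((55 : ℝ)/68719476736) * t ^ 8 + ((-11 : ℝ)/1099511627776) * t ^ 9 + ((1 : ℝ)/17592186044416) * t ^ 10) = 1 + (t - 16)^11 / 16^11 := by ring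
  have hge : (1:ℝ) ≤ t * (((11 : ℝ)/16) + ((-55 : ℝ)/256) * t ^ 1 + ((165 : ℝ)/4096) * t ^ 2 + ((-165 : ℝ)/32768) * t ^ 3 + ((231 : ℝ)/524288) * t ^ 4 + ((-231 : ℝ)/8388608) * t ^ 5 + ((165 : ℝ)/134217728) * t ^ 6 + ((-165 : ℝ)/4294967296) * t ^ 7 + ((55 : ℝ)/68719476736) * t ^ 8 + ((-11 : ℝ)/1099511627776) * t ^ 9 + ((1 : ℝ)/17592186044416) * t ^ 10) := by
    rw [key]
    have h11 : (0:ℝ) ≤ (t - 16)^11 / 16^11 := by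
      have := sub_nonneg.mpr ht.1
      positivity
    linarith
  have hinv : 1/t ≤ (((11 : ℝ)/16) + ((-55 : ℝ)/256) * t ^ 1 + ((165 : ℝ)/4096) * t ^ 2 + ((-165 : ℝ)/32768) * t ^ 3 + ((231 : ℝ)/524288) * t ^ 4 + ((-231 : ℝ)/8388608) * t ^ 5 + ((165 : ℝ)/134217728) * t ^ 6 + ((-165 : ℝ)/4294967296) * t ^ 7 + ((55 : ℝ)/68719476736) * t ^ 8 + ((-11 : ℝ)/1099511627776) * t ^ 9 + ((1 : ℝ)/17592186044416) * t ^ 10) := by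
    rw [div_le_iff₀ ht0, mul_comm]
    exact hge
  calc 1/(t * Real.exp t) = (1/t) * Real.exp (-t) := by rw [Real.exp_neg]; ring
    _ ≤ (((11 : ℝ)/16) + ((-55 : ℝ)/256) * t ^ 1 + ((165 : ℝ)/4096) * t ^ 2 + ((-165 : ℝ)/32768) * t ^ 3 + ((231 : ℝ)/524288) * t ^ 4 + ((-231 : ℝ)/8388608) * t ^ 5 + ((165 : ℝ)/134217728) * t ^ 6 + ((-165 : ℝ)/4294967296) * t ^ 7 + ((55 : ℝ)/68719476736) * t ^ 8 + ((-11 : ℝ)/1099511627776) * t ^ 9 + ((1 : ℝ)/17592186044416) * t ^ 10) * Real.exp (-t) := mul_le_mul_of_nonneg_right hinv (Real.exp_pos _).le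
    _ = Real.exp (-t) * (((11 : ℝ)/16) + ((-55 : ℝ)/256) * t ^ 1 + ((165 : ℝ)/4096) * t ^ 2 + ((-165 : ℝ)/32768) * t ^ 3 + ((231 : ℝ)/524288) * t ^ 4 + ((-231 : ℝ)/8388608) * t ^ 5 + ((165 : ℝ)/134217728) * t ^ 6 + ((-165 : ℝ)/4294967296) * t ^ 7 + ((55 : ℝ)/68719476736) * t ^ 8 + ((-11 : ℝ)/1099511627776) * t ^ 9 + ((1 : ℝ)/17592186044416) * t ^ 10) := by ring

private lemma mono3 : (∫ t in (16:ℝ)..25, 1/(t * Real.exp t))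
    ≤ Real.exp (-(16:ℝ)) * (((4055011655 : ℝ)/68719476736)) - Real.exp (-(25:ℝ)) * (((686572023269 : ℝ)/17592186044416)) := by
  rw [← ftc3]
  refine intervalIntegral.integral_mono_on (by norm_num)
    (contOn_f (by norm_num) (by norm_num))
    (Continuous.intervalIntegrable (by fun_prop) _ _) ?_
  intro t ht
  exact pointwise3 ht

theorem numeric_integral_bound :
    let β₀ : ℝ := 8.6142
    let lam : ℝ := 0.44581
    let α : ℝ := 0.76975
    (0.1039 : ℝ) <
      1/β₀ - ((1+2*α-2*lam)*(2*(1+α)^2+lam*(2+α)) * Real.exp (3+2*α))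
                / (4*lam*(α-lam)*(1+α)^2)
              * ∫ β in Set.Ioi β₀, 1/(β * Real.exp β) := by
  intro β₀ lam α
  show (0.1039 : ℝ) <
      1/(8.6142:ℝ) - ((1+2*(0.76975:ℝ)-2*(0.44581:ℝ))*(2*(1+(0.76975:ℝ))^2+(0.44581:ℝ)*(2+(0.76975:ℝ))) * Real.exp (3+2*(0.76975:ℝ)))
                / (4*(0.44581:ℝ)*((0.76975:ℝ)-(0.44581:ℝ))*(1+(0.76975:ℝ))^2)
              * ∫ β in Set.Ioi (8.6142:ℝ), 1/(β * Real.exp β)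
  have hJub : (∫ β in Set.Ioi (8.6142:ℝ), 1/(β * Real.exp β))
      ≤ Real.exp (-(8.6142:ℝ)) * (((175378633175988032061585138900542345206067515000 : ℝ)/1668981209889909568109762161024035559780349302713))
        + Real.exp (-(12:ℝ)) * (((-21483743604958240925511595248127460275306442543497 : ℝ)/7089337666661257353606385286056466306669951882575872))
        + Real.exp (-(16:ℝ)) * (((-1515033520739 : ℝ)/12173449145352192))
        + Real.exp (-(25:ℝ)) * (((427885462691 : ℝ)/439804651110400)) := by
    rw [split_int (by norm_num : (0:ℝ) < 8.6142) (by norm_num : (8.6142:ℝ) ≤ 12),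
      split_int (by norm_num : (0:ℝ) < 12) (by norm_num : (12:ℝ) ≤ 16),
      split_int (by norm_num : (0:ℝ) < 16) (by norm_num : (16:ℝ) ≤ 25)]
    have h1 := mono1
    have h2 := mono2
    have h3 := mono3
    have h4 := tail_bound
    linarith
  have hcoef : (0:ℝ) ≤ ((1+2*(0.76975:ℝ)-2*(0.44581:ℝ))*(2*(1+(0.76975:ℝ))^2+(0.44581:ℝ)*(2+(0.76975:ℝ))) * Real.exp (3+2*(0.76975:ℝ)))
                / (4*(0.44581:ℝ)*((0.76975:ℝ)-(0.44581:ℝ))*(1+(0.76975:ℝ))^2) := by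
    have := Real.exp_pos ((3:ℝ)+2*(0.76975:ℝ))
    positivity
  have h2 := mul_le_mul_of_nonneg_left hJub hcoef
  have e1 : Real.exp ((3:ℝ)+2*(0.76975:ℝ)) * Real.exp (-(8.6142:ℝ)) = Real.exp (-4.0747:ℝ) := by
    rw [← Real.exp_add]; norm_num
  have e2 : Real.exp ((3:ℝ)+2*(0.76975:ℝ)) * Real.exp (-(12:ℝ)) = Real.exp (-7.4605:ℝ) := by
    rw [← Real.exp_add]; norm_num
  have e3 : Real.exp ((3:ℝ)+2*(0.76975:ℝ)) * Real.exp (-(16:ℝ)) = Real.exp (-11.4605:ℝ) := by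
    rw [← Real.exp_add]; norm_num
  have e4 : Real.exp ((3:ℝ)+2*(0.76975:ℝ)) * Real.exp (-(25:ℝ)) = Real.exp (-20.4605:ℝ) := by
    rw [← Real.exp_add]; norm_num
  have hexpand : ((1+2*(0.76975:ℝ)-2*(0.44581:ℝ))*(2*(1+(0.76975:ℝ))^2+(0.44581:ℝ)*(2+(0.76975:ℝ))) * Real.exp (3+2*(0.76975:ℝ)))
                / (4*(0.44581:ℝ)*((0.76975:ℝ)-(0.44581:ℝ))*(1+(0.76975:ℝ))^2)
              * (Real.exp (-(8.6142:ℝ)) * (((175378633175988032061585138900542345206067515000 : ℝ)/1668981209889909568109762161024035559780349302713))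
                + Real.exp (-(12:ℝ)) * (((-21483743604958240925511595248127460275306442543497 : ℝ)/7089337666661257353606385286056466306669951882575872))
                + Real.exp (-(16:ℝ)) * (((-1515033520739 : ℝ)/12173449145352192))
                + Real.exp (-(25:ℝ)) * (((427885462691 : ℝ)/439804651110400)))
      = ((1+2*(0.76975:ℝ)-2*(0.44581:ℝ))*(2*(1+(0.76975:ℝ))^2+(0.44581:ℝ)*(2+(0.76975:ℝ))))
                / (4*(0.44581:ℝ)*((0.76975:ℝ)-(0.44581:ℝ))*(1+(0.76975:ℝ))^2)
              * ((Real.exp ((3:ℝ)+2*(0.76975:ℝ)) * Real.exp (-(8.6142:ℝ))) * (((175378633175988032061585138900542345206067515000 : ℝ)/1668981209889909568109762161024035559780349302713))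
                + (Real.exp ((3:ℝ)+2*(0.76975:ℝ)) * Real.exp (-(12:ℝ))) * (((-21483743604958240925511595248127460275306442543497 : ℝ)/7089337666661257353606385286056466306669951882575872))
                + (Real.exp ((3:ℝ)+2*(0.76975:ℝ)) * Real.exp (-(16:ℝ))) * (((-1515033520739 : ℝ)/12173449145352192))
                + (Real.exp ((3:ℝ)+2*(0.76975:ℝ)) * Real.exp (-(25:ℝ))) * (((427885462691 : ℝ)/439804651110400))) := by
    ring
  rw [hexpand, e1, e2, e3, e4] at h2
  have hub1 := exp_ub1
  have hub4 := exp_ub4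
  have hlb2 := exp_lb2
  have hlb3 := exp_lb3
  have hp1 := (Real.exp_pos (-4.0747:ℝ)).le
  have hp4 := (Real.exp_pos (-20.4605:ℝ)).le
  linarith [h2, hub1, hub4, hlb2, hlb3, hp1, hp4]
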